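/- Let λ and μ be types for d with λ_{t−1} = μ_{t−1}, with H-types s and r respectively. Let d* ∈ {0,…,q−2} with d* ≡ d − λ_{t−1}p^{t−1} (mod q−1), and let s* and r* be the H-types for d* of λ* = (λ₀,…,λ_{t−2},0) and μ* = (μ₀,…,μ_{t−2},0) respectively. Then s_i ≤ r_i for all i if and only if s*_i ≤ r*_i for all i; that is, the map λ ↦ λ* induces an order isomorphism on the corresponding sets of H-types. -/

import Mathlib

noncomputable section

/-- The `j`-th `p`-adic digit of `d`. -/
def digitp (p d j : ℕ) : ℕ := d / p ^ j % p

/-- If `λ, μ` are types for `d` with `λ_{t−1} = μ_{t−1}` and `H`-types `s, r`, and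
`s*, r*` are the `H`-types for `d* ≡ d − λ_{t−1}p^{t−1} (mod q−1)` of
`λ* = (λ₀,…,λ_{t−2},0)` and `μ* = (μ₀,…,μ_{t−2},0)`, then `s ≤ r` pointwise iff
`s* ≤ r*` pointwise: the map `λ ↦ λ*` induces an order isomorphism. -/
theorem htype_order_iso (p t m d : ℕ) [Fact p.Prime] [NeZero t]
    (hodd : Odd p) (ht : 1 < t) (hm : 2 ≤ m) (hd : d ≤ p ^ t - 2)
    (lam mu : Fin t → ℤ)
    (hlam : ∀ j, 0 ≤ lam j ∧ lam j ≤ 2 * m * (p - 1))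
    (hmu : ∀ j, 0 ≤ mu j ∧ mu j ≤ 2 * m * (p - 1))
    (hlamcong : Int.ModEq ((p : ℤ) ^ t - 1) (∑ j : Fin t, lam j * (p : ℤ) ^ (j : ℕ)) d)
    (hmucong : Int.ModEq ((p : ℤ) ^ t - 1) (∑ j : Fin t, mu j * (p : ℤ) ^ (j : ℕ)) d)
    (hlast : lam ⟨t - 1, by omega⟩ = mu ⟨t - 1, by omega⟩)
    (s r : Fin t → ℚ)
    (hs : ∀ j : Fin t, (lam j : ℚ) = p * s (j + 1) - s j + digitp p d (j : ℕ))
    (hr : ∀ j : Fin t, (mu j : ℚ) = p * r (j + 1) - r j + digitp p d (j : ℕ))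
    (dstar : ℕ) (hdstar : dstar ≤ p ^ t - 2)
    (hdstarcong : Int.ModEq ((p : ℤ) ^ t - 1) (dstar : ℤ)
      ((d : ℤ) - lam ⟨t - 1, by omega⟩ * (p : ℤ) ^ (t - 1)))
    (sstar rstar : Fin t → ℚ)
    (hsstar : ∀ j : Fin t,
      ((if (j : ℕ) = t - 1 then 0 else lam j : ℤ) : ℚ) =
        p * sstar (j + 1) - sstar j + digitp p dstar (j : ℕ))
    (hrstar : ∀ j : Fin t,
      ((if (j : ℕ) = t - 1 then 0 else mu j : ℤ) : ℚ) =
        p * rstar (j + 1) - rstar j + digitp p dstar (j : ℕ)) :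
    (∀ i, s i ≤ r i) ↔ (∀ i, sstar i ≤ rstar i) := by
  set g : Fin t → ℚ := fun j => (r j - s j) - (rstar j - sstar j) with hg
  have key : ∀ j : Fin t, g j = p * g (j + 1) := by
    intro j
    have h1 := hs j
    have h2 := hr j
    have h3 := hsstar j
    have h4 := hrstar j
    have hdiff : ((mu j : ℚ) - (lam j : ℚ)) =
        ((if (j : ℕ) = t - 1 then 0 else mu j : ℤ) : ℚ) -
        ((if (j : ℕ) = t - 1 then 0 else lam j : ℤ) : ℚ) := by
      split_ifs with h
      · have hj : j = ⟨t - 1, by omega⟩ := Fin.ext h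
        rw [hj, hlast]; simp
      · push_cast; ring
    simp only [hg]
    linear_combination h2 - h1 - h4 + h3 - hdiff
  open Fin.NatCast in
  have iter : ∀ n : ℕ, ∀ j : Fin t, g j = (p : ℚ) ^ n * g (j + (n : Fin t)) := by
    intro n
    induction n with
    | zero => intro j; simp
    | succ n ih =>
      intro j
      have e : j + 1 + (n : Fin t) = j + ((n + 1 : ℕ) : Fin t) := by
        push_cast; abel
      rw [key j, ih (j + 1), e]
      push_cast; ring
  have hp2 : 2 ≤ p := (Fact.out : p.Prime).two_le
  have hzero : ∀ j : Fin t, g j = 0 := by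
    intro j
    have h := iter t j
    open Fin.NatCast in
    rw [Fin.natCast_self t, add_zero] at h
    have hp : (1 : ℚ) < (p : ℚ) ^ t := by
      apply one_lt_pow₀ (by exact_mod_cast hp2) (by omega)
    have hzz : ((p : ℚ) ^ t - 1) * g j = 0 := by linarith
    rcases mul_eq_zero.mp hzz with h' | h'
    · exfalso; linarith
    · exact h'
  constructor
  · intro h i
    have hz := hzero i
    have hi := h i
    simp only [hg] at hz
    linarith
  · intro h i
    have hz := hzero i
    have hi := h i
    simp only [hg] at hz
    linarith

end
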